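/- A signed graph G is balanced if and only if every cycle of G is positive, i.e., every cycle of G contains an even number of negative edges. -/

import Mathlib

/-- Sign convention: `true` = positive edge, `false` = negative edge.
An edge `e` is *consistent* with the partition `(A, Aᶜ)` of the vertex set if it is
positive when both endpoints lie on the same side and negative otherwise. -/
def SignConsistent {V : Type*} (sign : Sym2 V → Bool) (A : Set V) (e : Sym2 V) : Prop :=
  ∀ u v : V, e = s(u, v) → (sign e = true ↔ (u ∈ A ↔ v ∈ A))

/-- The number of edges of the balanced subgraph induced by the partition `(A, Aᶜ)`. -/
noncomputable def balCount {V : Type*} (G : SimpleGraph V) (sign : Sym2 V → Bool)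
    (A : Set V) : ℕ :=
  {e | e ∈ G.edgeSet ∧ SignConsistent sign A e}.ncard

/-- `beta G sign` = β(G): the maximum number of edges of a balanced subgraph of the
signed graph `(G, sign)`. -/
noncomputable def beta {V : Type*} (G : SimpleGraph V) (sign : Sym2 V → Bool) : ℕ :=
  sSup {n | ∃ A : Set V, n = balCount G sign A}

/-- The Poljak–Turzík bound `pt G = m/2 + (n − t)/4`, where `m` is the number of edges,
`n` the number of vertices and `t` the number of connected components. -/
noncomputable def pt {V : Type*} (G : SimpleGraph V) : ℚ :=
  (G.edgeSet.ncard : ℚ) / 2 +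
    ((Nat.card V : ℚ) - (Nat.card G.ConnectedComponent : ℚ)) / 4

/-- β of the signed subgraph induced on the vertex set `U`. -/
noncomputable def betaOn {V : Type*} (G : SimpleGraph V) (sign : Sym2 V → Bool)
    (U : Set V) : ℕ :=
  beta (G.induce U) (fun e => sign (Sym2.map Subtype.val e))

/-- `pt` of the subgraph induced on the vertex set `U`. -/
noncomputable def ptOn {V : Type*} (G : SimpleGraph V) (U : Set V) : ℚ :=
  pt (G.induce U)

/-- The signed graph `(G, sign)` is balanced: some partition `(A, Aᶜ)` is consistent
with every edge. -/
def IsBalanced {V : Type*} (G : SimpleGraph V) (sign : Sym2 V → Bool) : Prop :=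
  ∃ A : Set V, ∀ u v : V, G.Adj u v → (sign s(u, v) = true ↔ (u ∈ A ↔ v ∈ A))

/-- `a`, `b`, `c` form a positive triangle: all three edges exist and the number of
negative edges among them is even. -/
def PositiveTriangle {V : Type*} (G : SimpleGraph V) (sign : Sym2 V → Bool)
    (a b c : V) : Prop :=
  G.Adj a b ∧ G.Adj b c ∧ G.Adj c a ∧
    Even ((if sign s(a, b) then 0 else 1) + (if sign s(b, c) then 0 else 1) +
      (if sign s(c, a) then 0 else 1))

/-- `X` is (the vertex set of) a connected component of `G − S`. -/
def IsCompOf {V : Type*} (G : SimpleGraph V) (S X : Set V) : Prop :=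
  Disjoint X S ∧ (G.induce X).Connected ∧
    ∀ x ∈ X, ∀ y : V, G.Adj x y → y ∉ S → y ∈ X

/-- The neighborhood of a vertex set `X`. -/
def nbhd {V : Type*} (G : SimpleGraph V) (X : Set V) : Set V :=
  {v | v ∉ X ∧ ∃ x ∈ X, G.Adj x v}

open SimpleGraph Walk

section HararyAux

variable {V : Type*} [DecidableEq V] {G : SimpleGraph V} (sign : Sym2 V → Bool)

private lemma harary_parity_walk (A : Set V)
    (hA : ∀ u v : V, G.Adj u v → (sign s(u, v) = true ↔ (u ∈ A ↔ v ∈ A))) :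
    ∀ {u v : V} (w : G.Walk u v),
      (Even (w.edges.countP (fun e => !sign e)) ↔ (u ∈ A ↔ v ∈ A)) := by
  intro u v w
  induction w with
  | nil => simp
  | @cons a b c h p ih =>
    rw [Walk.edges_cons, List.countP_cons]
    have hab := hA _ _ h
    rcases Bool.eq_false_or_eq_true (sign s(a, b)) with hs | hs
    · rw [hs] at hab
      simp only [hs, Bool.not_true]
      norm_num
      rw [ih]
      simp only [eq_self_iff_true, true_iff] at hab
      tauto
    · rw [hs] at hab
      simp only [Bool.false_eq_true, false_iff] at hab
      simp only [hs, Bool.not_false]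
      norm_num
      rw [Nat.even_add_one, ih]
      tauto

private lemma harary_path_loop_edge :
    ∀ {a b : V} (q : G.Walk a b), q.IsPath → s(b, a) ∈ q.edges → q.length = 1 := by
  intro a b q
  induction q with
  | nil => simp
  | @cons a c b h r ih =>
    intro hp he
    rw [Walk.edges_cons, List.mem_cons] at he
    have hp' := (Walk.cons_isPath_iff h r).mp hp
    rcases he with he | he
    · rw [Sym2.eq_iff] at he
      have hac : b = c := by
        rcases he with ⟨h1, h2⟩ | ⟨h1, h2⟩
        · exact h2 ▸ h1 ▸ rfl
        · exact h1
      subst hac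
      cases r with
      | nil => simp
      | cons h' s =>
        exfalso
        have := (Walk.cons_isPath_iff h' s).mp hp'.1
        exact this.2 s.end_mem_support
    · exfalso
      exact hp'.2 (Walk.snd_mem_support_of_mem_edges r he)

private lemma harary_split {n : ℕ}
    (IH : ∀ m, m < n → ∀ (u : V) (w : G.Walk u u), w.length = m →
      Even (w.edges.countP (fun e => !sign e)))
    (x : V) (w : G.Walk x x) (hlen : w.length = n)
    (hc : 2 ≤ w.support.tail.count x) :
    Even (w.edges.countP (fun e => !sign e)) := by
  cases w with
  | nil => simp
  | @cons a y b h q =>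
    have hx : x ∈ q.support := q.end_mem_support
    have hspec : (q.takeUntil x hx).append (q.dropUntil x hx) = q := q.take_spec hx
    set q1 := q.takeUntil x hx with hq1
    set q2 := q.dropUntil x hx with hq2
    have hcount1 : q1.support.count x = 1 := q.count_support_takeUntil_eq_one hx
    have hsupp : q.support = q1.support ++ q2.support.tail := by
      rw [← hspec]; exact Walk.support_append q1 q2
    have hc' : 2 ≤ q.support.count x := by
      simpa [Walk.support_cons] using hc
    have hc2 : 1 ≤ q2.support.tail.count x := by
      rw [hsupp, List.count_append, hcount1] at hc'
      omega
    have hq2len : 1 ≤ q2.length := by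
      by_contra hcon
      have h0 : q2.length = 0 := by omega
      have htl : q2.support.tail.length = 0 := by
        have hls := q2.length_support
        simp [List.length_tail, hls, h0]
      rw [List.length_eq_zero_iff] at htl
      rw [htl] at hc2
      simp at hc2
    have hlens : q1.length + q2.length = q.length := by
      rw [← hspec, Walk.length_append]
    have hedges : q.edges = q1.edges ++ q2.edges := by
      rw [← hspec, Walk.edges_append]
    have hn : q.length + 1 = n := by simpa using hlen
    have e1 : Even ((Walk.cons h q1).edges.countP (fun e => !sign e)) := by
      apply IH (q1.length + 1) (by omega) x (Walk.cons h q1)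
      simp
    have e2 : Even (q2.edges.countP (fun e => !sign e)) :=
      IH q2.length (by omega) x q2 rfl
    have hsum : (Walk.cons h q).edges.countP (fun e => !sign e) =
        (Walk.cons h q1).edges.countP (fun e => !sign e) +
        q2.edges.countP (fun e => !sign e) := by
      rw [Walk.edges_cons, Walk.edges_cons, hedges, List.countP_cons, List.countP_cons,
        List.countP_append]
      omega
    rw [hsum]
    exact e1.add e2

private lemma harary_even_closed
    (hcyc : ∀ (u : V) (w : G.Walk u u), w.IsCycle →
      Even (w.edges.countP (fun e => !sign e))) :
    ∀ (n : ℕ) (u : V) (w : G.Walk u u), w.length = n →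
      Even (w.edges.countP (fun e => !sign e)) := by
  intro n
  induction n using Nat.strong_induction_on with
  | _ n IH =>
  intro u w hn
  cases w with
  | nil => simp
  | @cons a b c h q =>
    by_cases hnd : (Walk.cons h q).support.tail.Nodup
    · have hq : q.IsPath := by
        rw [Walk.isPath_def]
        simpa [Walk.support_cons] using hnd
      by_cases hlen : q.length = 1
      · -- total length 2 : the two edges coincide
        cases q with
        | nil => simp at hlen
        | @cons a' b' c' h' r =>
          have hr0 : r.length = 0 := by
            simp only [Walk.length_cons] at hlen; omega
          have hb : b' = u := Walk.eq_of_length_eq_zero hr0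
          subst hb
          have hrnil : r = Walk.nil := (Walk.nil_iff_length_eq.mpr hr0).eq_nil
          subst hrnil
          have key : ∀ (c : Bool),
              Even (((0 : ℕ) + if (!c) = true then 1 else 0) + if (!c) = true then 1 else 0) := by
            intro c; cases c <;> simp
          simp only [Walk.edges_cons, Walk.edges_nil, List.countP_cons, List.countP_nil]
          rw [Sym2.eq_swap]
          exact key _
      · have hne : s(u, b) ∉ q.edges := fun he =>
          hlen (harary_path_loop_edge q hq he)
        have hcyc' : (Walk.cons h q).IsCycle := (Walk.cons_isCycle_iff q h).mpr ⟨hq, hne⟩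
        exact hcyc _ _ hcyc'
    · -- some vertex repeats: rotate there and split
      obtain ⟨x, hx2⟩ : ∃ x, 2 ≤ (Walk.cons h q).support.tail.count x := by
        by_contra hcon
        push_neg at hcon
        exact hnd (List.nodup_iff_count_le_one.mpr fun x => by have := hcon x; omega)
      have hxmem : x ∈ (Walk.cons h q).support := by
        apply List.mem_of_mem_tail
        by_contra hmem
        rw [List.count_eq_zero_of_not_mem hmem] at hx2
        omega
      have hrot : ((Walk.cons h q).rotate x hxmem).edges ~r (Walk.cons h q).edges :=
        Walk.rotate_edges _ x hxmem
      have hcnt : ((Walk.cons h q).rotate x hxmem).edges.countP (fun e => !sign e) =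
          (Walk.cons h q).edges.countP (fun e => !sign e) :=
        hrot.perm.countP_eq _
      have hlen' : ((Walk.cons h q).rotate x hxmem).length = n := by
        have h1 : ((Walk.cons h q).rotate x hxmem).edges.length = (Walk.cons h q).edges.length :=
          hrot.perm.length_eq
        rw [Walk.length_edges, Walk.length_edges] at h1
        omega
      have hsup : ((Walk.cons h q).rotate x hxmem).support.tail ~r (Walk.cons h q).support.tail :=
        Walk.support_rotate _ x hxmem
      have hc2 : 2 ≤ ((Walk.cons h q).rotate x hxmem).support.tail.count x := by
        rw [hsup.perm.count_eq]
        exact hx2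
      rw [← hcnt]
      exact harary_split sign IH x _ hlen' hc2

private lemma harary_same_parity
    (hev : ∀ (u : V) (w : G.Walk u u), Even (w.edges.countP (fun e => !sign e)))
    {a b : V} (w1 w2 : G.Walk a b) :
    (Even (w1.edges.countP (fun e => !sign e)) ↔
      Even (w2.edges.countP (fun e => !sign e))) := by
  have h := hev a (w1.append w2.reverse)
  rw [Walk.edges_append, List.countP_append, Walk.edges_reverse, List.countP_reverse] at h
  exact (Nat.even_add).mp h

end HararyAux

/-- Harary. A signed graph is balanced if and only if every cycle is
positive, i.e. every cycle contains an even number of negative edges. -/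


theorem stmt1 {V : Type*} [Fintype V] (G : SimpleGraph V) (sign : Sym2 V → Bool) :
    IsBalanced G sign ↔
      ∀ (u : V) (w : G.Walk u u), w.IsCycle →
        Even (w.edges.countP (fun e => !sign e)) := by
  classical
  constructor
  · rintro ⟨A, hA⟩ u w _
    exact (harary_parity_walk sign A hA w).mpr Iff.rfl
  · intro hcyc
    have hev : ∀ (u : V) (w : G.Walk u u), Even (w.edges.countP (fun e => !sign e)) :=
      fun u w => harary_even_closed sign hcyc w.length u w rfl
    refine ⟨{v | ∃ w : G.Walk (G.connectedComponentMk v).out v,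
      Even (w.edges.countP (fun e => !sign e))}, ?_⟩
    intro u v h
    have huv : G.connectedComponentMk u = G.connectedComponentMk v :=
      SimpleGraph.ConnectedComponent.sound h.reachable
    have hout : (G.connectedComponentMk v).out = (G.connectedComponentMk u).out := by
      rw [huv]
    obtain ⟨p⟩ : G.Reachable (G.connectedComponentMk u).out u :=
      SimpleGraph.ConnectedComponent.exact ((G.connectedComponentMk u).out_eq)
    set w2 := p.append (Walk.cons h Walk.nil) with hw2def
    have hu : (∃ w : G.Walk (G.connectedComponentMk u).out u,
        Even (w.edges.countP (fun e => !sign e))) ↔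
        Even (p.edges.countP (fun e => !sign e)) := by
      constructor
      · rintro ⟨q, hq⟩; exact (harary_same_parity sign hev q p).mp hq
      · intro hp; exact ⟨p, hp⟩
    have hv : (∃ w : G.Walk (G.connectedComponentMk v).out v,
        Even (w.edges.countP (fun e => !sign e))) ↔
        Even (w2.edges.countP (fun e => !sign e)) := by
      rw [hout]
      constructor
      · rintro ⟨q, hq⟩; exact (harary_same_parity sign hev q w2).mp hq
      · intro hp; exact ⟨w2, hp⟩
    have hcount : w2.edges.countP (fun e => !sign e) =
        p.edges.countP (fun e => !sign e) + (if (!sign s(u, v)) = true then 1 else 0) := by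
      rw [hw2def, Walk.edges_append, List.countP_append]
      simp [List.countP_cons]
    simp only [Set.mem_setOf_eq]
    rw [hu, hv, hcount]
    rcases Bool.eq_false_or_eq_true (sign s(u, v)) with hs | hs
    · simp [hs]
    · simp [hs, Nat.even_add_one]
      rw [← Nat.not_odd_iff_even]
      tauto
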